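/- Let n = 2b+1 be odd and let λ = (b, c, d) be a partition of n with exactly three parts satisfying c < b and d ≥ 2 (so b ≥ c ≥ d ≥ 2 and c + d = b + 1). Then |η_λ| ≤ D_{b+1} + b·D_b. -/

import Mathlib

set_option maxHeartbeats 1000000


/-- Derangement numbers: `D 0 = 1`, `D (m+1) = (m+1) * D m + (-1)^(m+1)`. -/
def derange : ℕ → ℤ
  | 0 => 1
  | n + 1 => (n + 1 : ℤ) * derange n + (-1) ^ (n + 1)

/-- Subtract one from every part and discard the parts that become zero
(deleting the first column of the Ferrers diagram). -/
def strip (l : List ℕ) : List ℕ := (l.map (· - 1)).filter (fun x => 0 < x)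

lemma strip_measure (l : List ℕ) : (strip l).sum + (strip l).length ≤ l.sum := by
  induction l with
  | nil => simp [strip]
  | cons x t ih =>
      simp only [strip, List.map_cons, List.filter_cons] at ih ⊢
      by_cases hx : 0 < x - 1 <;> simp [hx] <;> omega

/-- The eigenvalues of the derangement graph, defined by Renteln's recurrence:
`η ∅ = 1` and `η λ = (-1)^h (η (λ-ĥ) + (-1)^{λ₁} h η (λ-ĉ))`, where
`h = λ₁ + r - 1` is the hook size, `λ-ĥ = strip (tail λ)` removes the hook,
and `λ-ĉ = strip λ` removes the first column. -/
def eta : List ℕ → ℤ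
  | [] => 1
  | a :: t =>
      (-1) ^ (a + t.length) *
        (eta (strip t) + (-1) ^ a * ((a : ℤ) + t.length) * eta (strip (a :: t)))
  termination_by l => l.sum + l.length
  decreasing_by
  · have h1 := strip_measure t
    simp only [List.sum_cons, List.length_cons]
    omega
  · have h1 := strip_measure (a :: t)
    simp only [List.sum_cons, List.length_cons] at h1 ⊢
    omega

/-- `l` is (the list of parts of) a partition of `n`: weakly decreasing,
all parts positive, summing to `n`. -/
def IsPartition (n : ℕ) (l : List ℕ) : Prop :=
  l.Pairwise (· ≥ ·) ∧ (∀ x ∈ l, 0 < x) ∧ l.sum = n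

/-- The hook partition `(a, 1^(n-a))` of `n`. -/
def hookP (n a : ℕ) : List ℕ := a :: List.replicate (n - a) 1

lemma derange_succ (n : ℕ) : derange (n+1) = ((n:ℤ)+1) * derange n + (-1)^(n+1) := by
  rw [derange]

lemma neg_one_pow_bounds (n : ℕ) : -1 ≤ ((-1:ℤ))^n ∧ ((-1:ℤ))^n ≤ 1 := by
  rcases Nat.even_or_odd n with h | h <;> simp [h.neg_one_pow]

lemma one_le_derange : ∀ m, 2 ≤ m → 1 ≤ derange m := by
  intro m hm
  induction m, hm using Nat.le_induction with
  | base => norm_num [derange]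
  | succ n hn ih =>
    rw [derange_succ]
    have := (neg_one_pow_bounds (n+1)).1
    have hn2 : (2:ℤ) ≤ (n:ℤ) := by exact_mod_cast hn
    nlinarith

lemma derange_nonneg : ∀ m, 0 ≤ derange m := by
  intro m
  match m with
  | 0 => norm_num [derange]
  | 1 => norm_num [derange]
  | (k+2) => linarith [one_le_derange (k+2) (by omega)]

lemma derange_le_factorial_sub_one : ∀ m, 1 ≤ m → derange m ≤ (m.factorial : ℤ) - 1 := by
  intro m hm
  induction m, hm using Nat.le_induction with
  | base => norm_num [derange]
  | succ n hn ih =>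
    rw [derange_succ]
    have := (neg_one_pow_bounds (n+1)).2
    have h2 : (Nat.factorial (n+1) : ℤ) = ((n:ℤ)+1) * (Nat.factorial n : ℤ) := by
      rw [Nat.factorial_succ]; push_cast; ring
    have hn2 : (1:ℤ) ≤ (n:ℤ) := by exact_mod_cast hn
    nlinarith

lemma derange_le_factorial (m : ℕ) : derange m ≤ (m.factorial : ℤ) := by
  match m with
  | 0 => norm_num [derange]
  | (k+1) => linarith [derange_le_factorial_sub_one (k+1) (by omega)]

lemma two_derange_le' : ∀ m, 3 ≤ m → 2 * derange m ≤ (m.factorial : ℤ) - 2 := by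
  intro m hm
  induction m, hm using Nat.le_induction with
  | base => norm_num [derange, Nat.factorial]
  | succ n hn ih =>
    rw [derange_succ]
    have := (neg_one_pow_bounds (n+1)).2
    have h2 : (Nat.factorial (n+1) : ℤ) = ((n:ℤ)+1) * (Nat.factorial n : ℤ) := by
      rw [Nat.factorial_succ]; push_cast; ring
    have hn2 : (3:ℤ) ≤ (n:ℤ) := by exact_mod_cast hn
    nlinarith

lemma two_derange_le : ∀ m, 2 ≤ m → 2 * derange m ≤ (m.factorial : ℤ) := by
  intro m hm
  match m, hm with
  | 2, _ => norm_num [derange, Nat.factorial]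
  | (k+3), _ => linarith [two_derange_le' (k+3) (by omega)]

lemma three_derange_ge : ∀ m, 4 ≤ m → (m.factorial : ℤ) + 3 ≤ 3 * derange m := by
  intro m hm
  induction m, hm using Nat.le_induction with
  | base => norm_num [derange, Nat.factorial]
  | succ n hn ih =>
    rw [derange_succ]
    have := (neg_one_pow_bounds (n+1)).1
    have h2 : (Nat.factorial (n+1) : ℤ) = ((n:ℤ)+1) * (Nat.factorial n : ℤ) := by
      rw [Nat.factorial_succ]; push_cast; ring
    have hn2 : (4:ℤ) ≤ (n:ℤ) := by exact_mod_cast hn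
    nlinarith

-- ascending factorial over ℚ
def ascQ (a k : ℕ) : ℚ := ∏ i ∈ Finset.range k, ((a:ℚ) + i)

lemma ascQ_zero (a : ℕ) : ascQ a 0 = 1 := by simp [ascQ]

lemma ascQ_succ (a k : ℕ) : ascQ a (k+1) = ascQ a k * ((a:ℚ) + k) := by
  simp [ascQ, Finset.prod_range_succ]

lemma ascQ_pos (a k : ℕ) (ha : 1 ≤ a) : 0 < ascQ a k := by
  apply Finset.prod_pos
  intro i _
  have : (1:ℚ) ≤ (a:ℚ) := by exact_mod_cast ha
  positivity

lemma ascQ_succ_left (a k : ℕ) : ascQ a (k+1) = (a:ℚ) * ascQ (a+1) k := by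
  induction k with
  | zero => simp [ascQ_succ, ascQ_zero]
  | succ n ih =>
    rw [ascQ_succ, ih, ascQ_succ]
    push_cast
    ring

lemma ascQ_mono_base (a b k : ℕ) (ha : 1 ≤ a) (hab : a ≤ b) : ascQ a k ≤ ascQ b k := by
  apply Finset.prod_le_prod
  · intro i _
    have : (1:ℚ) ≤ (a:ℚ) := by exact_mod_cast ha
    positivity
  · intro i _
    have : (a:ℚ) ≤ (b:ℚ) := by exact_mod_cast hab
    linarith

lemma one_le_ascQ (a k : ℕ) (ha : 1 ≤ a) : 1 ≤ ascQ a k := by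
  induction k with
  | zero => simp [ascQ_zero]
  | succ n ih =>
    rw [ascQ_succ]
    have h1 : (1:ℚ) ≤ (a:ℚ) := by exact_mod_cast ha
    nlinarith

lemma base_le_ascQ (a k : ℕ) (ha : 1 ≤ a) : (a:ℚ) ≤ ascQ a (k+1) := by
  rw [ascQ_succ_left]
  have h2 := one_le_ascQ (a+1) k (by omega)
  have h1 : (0:ℚ) < (a:ℚ) := by exact_mod_cast ha
  nlinarith

lemma factorial_ascQ (k m : ℕ) :
    (k.factorial : ℚ) * ascQ (k+1) m = ((k+m).factorial : ℚ) := by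
  induction m with
  | zero => simp [ascQ_zero]
  | succ n ih =>
    rw [ascQ_succ, ← mul_assoc, ih, show k+(n+1) = (k+n)+1 from rfl, Nat.factorial_succ]
    push_cast
    ring
lemma eta_nil : eta [] = 1 := by rw [eta]

lemma eta_single : ∀ m : ℕ, eta [m] = derange m := by
  intro m
  induction m using Nat.strong_induction_on with
  | _ m ih =>
    match m with
    | 0 => rw [eta]; simp [strip, eta_nil, derange]
    | 1 => rw [eta]; simp [strip, eta_nil, derange]
    | (k+2) =>
      rw [eta]
      simp only [List.length_nil, Nat.add_zero, strip, List.map_cons, List.map_nil, List.filter]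
      norm_num
      rw [ih (k+1) (by omega), eta_nil, show k+2 = (k+1)+1 from rfl, derange_succ (k+1)]
      rcases Nat.even_or_odd k with hk | hk <;>
        simp only [pow_succ, pow_add, hk.neg_one_pow] <;> push_cast <;> ring

lemma eta_two_one (x : ℕ) : eta [x+1, 1] = -(derange (x+1) + derange x) := by
  match x with
  | 0 => rw [eta]; simp [strip, eta_nil, derange]
  | (k+1) =>
    rw [eta]
    simp only [strip, List.map_cons, List.map_nil, List.filter, List.length_cons, List.length_nil]
    norm_num
    rw [eta_nil, eta_single, show k+1+1 = (k+1)+1 from rfl, derange_succ (k+1)]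
    rcases Nat.even_or_odd k with hk | hk <;>
      simp only [pow_succ, pow_add, hk.neg_one_pow] <;> push_cast <;> ring

lemma eta_two_step (x y : ℕ) :
    eta [x+2, y+2] = (-1)^(x+1) * derange (y+1) - ((x:ℤ)+3) * eta [x+1, y+1] := by
  rw [eta]
  simp only [strip, List.map_cons, List.map_nil, List.filter, List.length_cons, List.length_nil]
  norm_num
  rw [eta_single]
  rcases Nat.even_or_odd x with hk | hk <;>
    simp only [pow_succ, pow_add, hk.neg_one_pow] <;> push_cast <;> ring

lemma eta_three_one_one (x : ℕ) : eta [x+2, 1, 1] = (-1)^x + ((x:ℤ)+4) * derange (x+1) := by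
  rw [eta]
  simp only [strip, List.map_cons, List.map_nil, List.filter, List.length_cons, List.length_nil]
  norm_num
  rw [eta_nil, eta_single]
  rcases Nat.even_or_odd x with hk | hk <;>
    simp only [pow_succ, pow_add, hk.neg_one_pow] <;> push_cast <;> ring

lemma eta_three_base (x y : ℕ) :
    eta [x+3, y+2, 1] = (-1)^(x+3) * derange (y+1) + ((x:ℤ)+5) * eta [x+2, y+1] := by
  rw [eta]
  simp only [strip, List.map_cons, List.map_nil, List.filter, List.length_cons, List.length_nil]
  norm_num
  rw [eta_single]
  rcases Nat.even_or_odd x with hk | hk <;>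
    simp only [pow_succ, pow_add, hk.neg_one_pow] <;> push_cast <;> ring

lemma eta_three_step (x y z : ℕ) :
    eta [x+3, y+2, z+2] = (-1)^(x+3) * eta [y+1, z+1] + ((x:ℤ)+5) * eta [x+2, y+1, z+1] := by
  rw [eta]
  simp only [strip, List.map_cons, List.map_nil, List.filter, List.length_cons, List.length_nil]
  norm_num
  rcases Nat.even_or_odd x with hk | hk <;>
    simp only [pow_succ, pow_add, hk.neg_one_pow] <;> push_cast <;> ring

-- ## Two-row bound
def S2 (v : ℕ) : ℚ := (derange (v+1) : ℚ) + (derange v : ℚ) + 1/((v:ℚ)+1)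

lemma S2_pos (v : ℕ) : 0 < S2 v := by
  unfold S2
  have h1 : (0:ℚ) ≤ (derange (v+1) : ℚ) := by exact_mod_cast derange_nonneg (v+1)
  have h2 : (0:ℚ) ≤ (derange v : ℚ) := by exact_mod_cast derange_nonneg v
  have h3 : (0:ℚ) < 1/((v:ℚ)+1) := by positivity
  linarith

lemma two_row : ∀ y v : ℕ, |((eta [y+1+v, y+1] : ℤ) : ℚ)| ≤
    ascQ (v+3) y * S2 v - ((y+1).factorial : ℚ) / ((v:ℚ)+1) := by
  intro y
  induction y with
  | zero =>
    intro v
    have h := eta_two_one v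
    rw [show 0+1+v = v+1 by omega, h]
    push_cast
    rw [abs_neg, abs_of_nonneg]
    · rw [ascQ_zero, S2]
      norm_num
    · have h1 : (0:ℚ) ≤ (derange (v+1) : ℚ) := by exact_mod_cast derange_nonneg (v+1)
      have h2 : (0:ℚ) ≤ (derange v : ℚ) := by exact_mod_cast derange_nonneg v
      linarith
  | succ k ih =>
    intro v
    have h := eta_two_step (k+v) k
    have habs : |eta [k+v+2, k+2]| ≤ derange (k+1) + (((k+v:ℕ):ℤ)+3) * |eta [k+v+1, k+1]| := by
      rw [h]
      calc |(-1)^(k+v+1) * derange (k+1) - (((k+v:ℕ):ℤ)+3) * eta [k+v+1, k+1]|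
          ≤ |(-1)^(k+v+1) * derange (k+1)| + |(((k+v:ℕ):ℤ)+3) * eta [k+v+1, k+1]| := abs_sub _ _
        _ = derange (k+1) + (((k+v:ℕ):ℤ)+3) * |eta [k+v+1, k+1]| := by
            rw [abs_mul, abs_mul, abs_pow, abs_neg, abs_one, one_pow, one_mul,
              abs_of_nonneg (derange_nonneg (k+1)),
              abs_of_nonneg (show (0:ℤ) ≤ ((k+v:ℕ):ℤ)+3 by positivity)]
    have hih := ih v
    rw [show k+1+v = k+v+1 by omega] at hih
    have hD : (derange (k+1) : ℚ) ≤ ((k+1).factorial : ℚ) := by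
      exact_mod_cast derange_le_factorial (k+1)
    have hfac : ((k+2).factorial : ℚ) = ((k:ℚ)+2) * ((k+1).factorial : ℚ) := by
      rw [show (k+2) = (k+1)+1 from rfl, Nat.factorial_succ]; push_cast; ring
    have hasc : ascQ (v+3) (k+1) = ascQ (v+3) k * ((v:ℚ)+3+(k:ℚ)) := by
      rw [ascQ_succ]; push_cast; ring
    have hvpos : (0:ℚ) < (v:ℚ)+1 := by positivity
    have habsQ : |((eta [k+1+1+v, k+1+1] : ℤ) : ℚ)| ≤
        (derange (k+1) : ℚ) + ((k:ℚ)+(v:ℚ)+3) * |((eta [k+v+1, k+1] : ℤ) : ℚ)| := by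
      rw [show k+1+1+v = k+v+2 by omega]
      rw [← Int.cast_abs, ← Int.cast_abs]
      exact_mod_cast habs
    have hkey : ((k+1).factorial : ℚ) ≤ (((k:ℚ)+(v:ℚ)+3) - ((k:ℚ)+2)) * (((k+1).factorial : ℚ) / ((v:ℚ)+1)) := by
      have hh : (((k:ℚ)+(v:ℚ)+3) - ((k:ℚ)+2)) * (((k+1).factorial : ℚ) / ((v:ℚ)+1)) = ((k+1).factorial : ℚ) := by
        field_simp
        ring
      rw [hh]
    calc |((eta [k+1+1+v, k+1+1] : ℤ) : ℚ)|
        ≤ (derange (k+1) : ℚ) + ((k:ℚ)+(v:ℚ)+3) * |((eta [k+v+1, k+1] : ℤ) : ℚ)| := habsQ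
      _ ≤ (derange (k+1) : ℚ) + ((k:ℚ)+(v:ℚ)+3) * (ascQ (v+3) k * S2 v - ((k+1).factorial : ℚ) / ((v:ℚ)+1)) := by
          have h0 : (0:ℚ) ≤ (k:ℚ)+(v:ℚ)+3 := by positivity
          nlinarith [hih]
      _ ≤ ascQ (v+3) (k+1) * S2 v - ((k+2).factorial : ℚ) / ((v:ℚ)+1) := by
          rw [hasc, hfac]
          have expand : ((k:ℚ)+2) * ((k+1).factorial : ℚ) / ((v:ℚ)+1)
              = ((k:ℚ)+2) * (((k+1).factorial : ℚ) / ((v:ℚ)+1)) := by ring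
          rw [expand]
          nlinarith [hkey, hD]

lemma two_row_le (y v : ℕ) : |((eta [y+1+v, y+1] : ℤ) : ℚ)| ≤ ascQ (v+3) y * S2 v := by
  have h := two_row y v
  have h2 : (0:ℚ) ≤ ((y+1).factorial : ℚ) / ((v:ℚ)+1) := by positivity
  linarith

-- ## Three-row bound
def LL (t : ℕ) : ℕ → ℚ
  | 0 => 1 + ((t:ℚ)+4) * (derange (t+1) : ℚ)
  | (v'+1) => (derange (v'+1) : ℚ) + ((v':ℚ)+(t:ℚ)+5) * (ascQ (t+4) v' * S2 (t+1))

def WW (v z : ℕ) : ℚ :=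
  S2 v * ((v:ℚ)+3) * ((v:ℚ)+4) / 2 *
    (1/(((v:ℚ)+3)*((v:ℚ)+4)) - 1/((((v:ℚ)+(z:ℚ)+2))*(((v:ℚ)+(z:ℚ)+3))))

lemma WW_one (v : ℕ) : WW v 1 = 0 := by
  unfold WW
  push_cast
  ring

lemma WW_diff (v z : ℕ) : WW v (z+2) - WW v (z+1) =
    S2 v * ((v:ℚ)+3) * ((v:ℚ)+4) / (((v:ℚ)+(z:ℚ)+3) * ((v:ℚ)+(z:ℚ)+4) * ((v:ℚ)+(z:ℚ)+5)) := by
  unfold WW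
  have h1 : ((v:ℚ)+(z:ℚ)+3) ≠ 0 := by positivity
  have h2 : ((v:ℚ)+(z:ℚ)+4) ≠ 0 := by positivity
  have h3 : ((v:ℚ)+(z:ℚ)+5) ≠ 0 := by positivity
  push_cast
  field_simp
  ring

lemma WW_le (v z : ℕ) : WW v (z+1) ≤ S2 v / 2 := by
  unfold WW
  have hS := S2_pos v
  have h1 : (0:ℚ) < ((v:ℚ)+3)*((v:ℚ)+4) := by positivity
  have h2 : (0:ℚ) < (((v:ℚ)+(z:ℚ)+3))*(((v:ℚ)+(z:ℚ)+4)) := by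
    push_cast; positivity
  have key : 1/(((v:ℚ)+3)*((v:ℚ)+4)) - 1/((((v:ℚ)+((z:ℕ)+1:ℕ)+2))*(((v:ℚ)+((z+1:ℕ)):ℚ)+3)) ≤ 1/(((v:ℚ)+3)*((v:ℚ)+4)) := by
    push_cast
    have h4 : (0:ℚ) < 1/(((v:ℚ)+((z:ℚ)+1)+2)*(((v:ℚ)+((z:ℚ)+1))+3)) := by positivity
    linarith
  calc S2 v * ((v:ℚ)+3) * ((v:ℚ)+4) / 2 *
      (1/(((v:ℚ)+3)*((v:ℚ)+4)) - 1/((((v:ℚ)+((z+1:ℕ)):ℚ)+2)*(((v:ℚ)+((z+1:ℕ)):ℚ)+3)))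
      ≤ S2 v * ((v:ℚ)+3) * ((v:ℚ)+4) / 2 * (1/(((v:ℚ)+3)*((v:ℚ)+4))) := by
        have hc : (0:ℚ) ≤ S2 v * ((v:ℚ)+3) * ((v:ℚ)+4) / 2 := by positivity
        apply mul_le_mul_of_nonneg_left _ hc
        push_cast at key ⊢
        linarith
    _ = S2 v / 2 := by field_simp


lemma three_row : ∀ z t v : ℕ, |((eta [v+t+z+2, v+z+1, z+1] : ℤ) : ℚ)| ≤
    ascQ (v+t+5) z * (LL t v + WW v (z+1)) := by
  intro z
  induction z with
  | zero =>
    intro t v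
    rw [ascQ_zero, WW_one, one_mul, add_zero]
    match v with
    | 0 =>
      have h := eta_three_one_one t
      rw [show 0+t+0+2 = t+2 by omega, h]
      simp only [LL, add_zero]
      push_cast
      have h1 : (0:ℚ) ≤ (derange (t+1) : ℚ) := by exact_mod_cast derange_nonneg (t+1)
      calc |((-1:ℚ))^t + ((t:ℚ)+4) * (derange (t+1) : ℚ)|
          ≤ |((-1:ℚ))^t| + |((t:ℚ)+4) * (derange (t+1) : ℚ)| := abs_add_le _ _
        _ ≤ 1 + ((t:ℚ)+4) * (derange (t+1) : ℚ) := by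
            rw [abs_pow, abs_neg, abs_one, one_pow, abs_mul,
              abs_of_nonneg (show (0:ℚ) ≤ (t:ℚ)+4 by positivity), abs_of_nonneg h1]
    | v'+1 =>
      have h := eta_three_base (v'+t) v'
      rw [show v'+1+t+0+2 = v'+t+3 by omega, show v'+1+0+1 = v'+2 by omega, h]
      have h2row := two_row_le v' (t+1)
      rw [show v'+1+(t+1) = v'+t+2 by omega] at h2row
      simp only [LL, add_zero]
      have h1 : (0:ℚ) ≤ (derange (v'+1) : ℚ) := by exact_mod_cast derange_nonneg (v'+1)
      push_cast
      calc |((-1:ℚ))^(v'+t+3) * (derange (v'+1):ℚ) + ((v':ℚ)+(t:ℚ)+5) * ((eta [v'+t+2, v'+1] : ℤ):ℚ)|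
          ≤ |((-1:ℚ))^(v'+t+3) * (derange (v'+1):ℚ)| + |((v':ℚ)+(t:ℚ)+5) * ((eta [v'+t+2, v'+1]:ℤ):ℚ)| :=
            abs_add_le _ _
        _ = (derange (v'+1):ℚ) + ((v':ℚ)+(t:ℚ)+5) * |((eta [v'+t+2, v'+1]:ℤ):ℚ)| := by
            rw [abs_mul, abs_mul, abs_pow, abs_neg, abs_one, one_pow, one_mul, abs_of_nonneg h1,
              abs_of_nonneg (show (0:ℚ) ≤ (v':ℚ)+(t:ℚ)+5 by positivity)]
        _ ≤ (derange (v'+1):ℚ) + ((v':ℚ)+(t:ℚ)+5) * (ascQ (t+4) v' * S2 (t+1)) := by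
            have hc : (0:ℚ) ≤ (v':ℚ)+(t:ℚ)+5 := by positivity
            have h2 := abs_nonneg ((eta [v'+t+2, v'+1] : ℤ):ℚ)
            push_cast at h2row
            nlinarith [h2row]
  | succ z ih =>
    intro t v
    have h := eta_three_step (v+t+z) (v+z) z
    rw [show v+t+(z+1)+2 = v+t+z+3 by omega, show v+(z+1)+1 = v+z+2 by omega,
      show (z+1)+1 = z+2 from rfl, h]
    have habs : |(-1)^(v+t+z+3) * eta [v+z+1, z+1] + (((v+t+z:ℕ):ℤ)+5) * eta [v+t+z+2, v+z+1, z+1]|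
        ≤ |eta [v+z+1, z+1]| + (((v+t+z:ℕ):ℤ)+5) * |eta [v+t+z+2, v+z+1, z+1]| := by
      calc |(-1)^(v+t+z+3) * eta [v+z+1, z+1] + (((v+t+z:ℕ):ℤ)+5) * eta [v+t+z+2, v+z+1, z+1]|
          ≤ |(-1)^(v+t+z+3) * eta [v+z+1, z+1]| + |(((v+t+z:ℕ):ℤ)+5) * eta [v+t+z+2, v+z+1, z+1]| :=
            abs_add_le _ _
        _ = |eta [v+z+1, z+1]| + (((v+t+z:ℕ):ℤ)+5) * |eta [v+t+z+2, v+z+1, z+1]| := by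
            rw [abs_mul, abs_mul, abs_pow, abs_neg, abs_one, one_pow, one_mul,
              abs_of_nonneg (show (0:ℤ) ≤ ((v+t+z:ℕ):ℤ)+5 by positivity)]
    have h2row := two_row_le z v
    rw [show z+1+v = v+z+1 by omega] at h2row
    have hIH := ih t v
    have hmono : ascQ (v+5) (z+1) ≤ ascQ (v+t+5) (z+1) :=
      ascQ_mono_base (v+5) (v+t+5) (z+1) (by omega) (by omega)
    have hkey : ascQ (v+3) z * S2 v ≤ ascQ (v+t+5) (z+1) * (WW v (z+2) - WW v (z+1)) := by
      rw [WW_diff, ← sub_nonneg]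
      have hD1 : (0:ℚ) < (v:ℚ)+(z:ℚ)+3 := by positivity
      have hD2 : (0:ℚ) < (v:ℚ)+(z:ℚ)+4 := by positivity
      have hD3 : (0:ℚ) < (v:ℚ)+(z:ℚ)+5 := by positivity
      have hS := S2_pos v
      have hfactor : ascQ (v+3) z * (((v:ℚ)+(z:ℚ)+3) * ((v:ℚ)+(z:ℚ)+4) * ((v:ℚ)+(z:ℚ)+5))
          = (((v:ℚ)+3) * ((v:ℚ)+4)) * ascQ (v+5) (z+1) := by
        have e1 : ascQ (v+3) (z+3) = ascQ (v+3) z *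
            (((v:ℚ)+3+(z:ℚ)) * ((v:ℚ)+3+((z:ℚ)+1)) * ((v:ℚ)+3+((z:ℚ)+2))) := by
          rw [show z+3 = (z+2)+1 from rfl, ascQ_succ, show z+2 = (z+1)+1 from rfl, ascQ_succ, ascQ_succ]
          push_cast
          ring
        have e2 : ascQ (v+3) (z+3) = ((v:ℚ)+3) * (((v:ℚ)+4) * ascQ (v+5) (z+1)) := by
          rw [show z+3 = (z+2)+1 from rfl, ascQ_succ_left,
            show z+2 = (z+1)+1 from rfl, ascQ_succ_left (v+4)]
          push_cast
          ring
        calc ascQ (v+3) z * (((v:ℚ)+(z:ℚ)+3) * ((v:ℚ)+(z:ℚ)+4) * ((v:ℚ)+(z:ℚ)+5))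
            = ascQ (v+3) z * (((v:ℚ)+3+(z:ℚ)) * ((v:ℚ)+3+((z:ℚ)+1)) * ((v:ℚ)+3+((z:ℚ)+2))) := by ring
          _ = ascQ (v+3) (z+3) := e1.symm
          _ = (((v:ℚ)+3) * ((v:ℚ)+4)) * ascQ (v+5) (z+1) := by rw [e2]; ring
      have hexp : ascQ (v+t+5) (z+1) * (S2 v * ((v:ℚ)+3) * ((v:ℚ)+4) /
          (((v:ℚ)+(z:ℚ)+3) * ((v:ℚ)+(z:ℚ)+4) * ((v:ℚ)+(z:ℚ)+5))) - ascQ (v+3) z * S2 v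
          = (S2 v / (((v:ℚ)+(z:ℚ)+3) * ((v:ℚ)+(z:ℚ)+4) * ((v:ℚ)+(z:ℚ)+5))) *
            (ascQ (v+t+5) (z+1) * (((v:ℚ)+3) * ((v:ℚ)+4))
              - ascQ (v+3) z * (((v:ℚ)+(z:ℚ)+3) * ((v:ℚ)+(z:ℚ)+4) * ((v:ℚ)+(z:ℚ)+5))) := by
        field_simp
      rw [hexp, hfactor]
      apply mul_nonneg
      · positivity
      · have hvv : (0:ℚ) < ((v:ℚ)+3) * ((v:ℚ)+4) := by positivity
        nlinarith [hmono]
    have hascstep : ascQ (v+t+5) (z+1) = ascQ (v+t+5) z * ((v:ℚ)+(t:ℚ)+(z:ℚ)+5) := by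
      rw [ascQ_succ]
      push_cast
      ring
    have habsQ : |((((-1:ℤ))^(v+t+z+3) * eta [v+z+1, z+1] + (((v+t+z:ℕ):ℤ)+5) * eta [v+t+z+2, v+z+1, z+1] : ℤ) : ℚ)|
        ≤ |((eta [v+z+1, z+1] : ℤ):ℚ)| + ((v:ℚ)+(t:ℚ)+(z:ℚ)+5) * |((eta [v+t+z+2, v+z+1, z+1] : ℤ):ℚ)| := by
      rw [← Int.cast_abs, ← Int.cast_abs, ← Int.cast_abs]
      exact_mod_cast habs
    rw [hascstep] at hkey
    calc |((((-1:ℤ))^(v+t+z+3) * eta [v+z+1, z+1] + (((v+t+z:ℕ):ℤ)+5) * eta [v+t+z+2, v+z+1, z+1] : ℤ) : ℚ)|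
        ≤ |((eta [v+z+1, z+1] : ℤ):ℚ)| + ((v:ℚ)+(t:ℚ)+(z:ℚ)+5) * |((eta [v+t+z+2, v+z+1, z+1] : ℤ):ℚ)| := habsQ
      _ ≤ ascQ (v+3) z * S2 v + ((v:ℚ)+(t:ℚ)+(z:ℚ)+5) * (ascQ (v+t+5) z * (LL t v + WW v (z+1))) := by
          have hc : (0:ℚ) ≤ (v:ℚ)+(t:ℚ)+(z:ℚ)+5 := by positivity
          have h2 := abs_nonneg ((eta [v+t+z+2, v+z+1, z+1] : ℤ):ℚ)
          nlinarith [h2row, hIH]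
      _ ≤ ascQ (v+t+5) z * ((v:ℚ)+(t:ℚ)+(z:ℚ)+5) * (WW v (z+2) - WW v (z+1))
            + ascQ (v+t+5) z * ((v:ℚ)+(t:ℚ)+(z:ℚ)+5) * (LL t v + WW v (z+1)) := by
          nlinarith [hkey]
      _ = ascQ (v+t+5) z * ((v:ℚ)+(t:ℚ)+(z:ℚ)+5) * (LL t v + WW v (z+2)) := by ring
      _ = ascQ (v+t+5) (z+1) * (LL t v + WW v (z+2)) := by rw [hascstep]

lemma three_row_le (z t v : ℕ) : |((eta [v+t+z+2, v+z+1, z+1] : ℤ) : ℚ)| ≤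
    ascQ (v+t+5) z * (LL t v + S2 v / 2) := by
  have h := three_row z t v
  have hW := WW_le v z
  have hasc := ascQ_pos (v+t+5) z (by omega)
  calc |((eta [v+t+z+2, v+z+1, z+1] : ℤ) : ℚ)|
      ≤ ascQ (v+t+5) z * (LL t v + WW v (z+1)) := h
    _ ≤ ascQ (v+t+5) z * (LL t v + S2 v / 2) := by nlinarith [hW, hasc]

lemma derange1 : derange 1 = 0 := by decide
lemma derange2 : derange 2 = 1 := by decide
lemma derange3 : derange 3 = 2 := by decide
lemma derange4 : derange 4 = 9 := by decide

lemma S2_le : ∀ m : ℕ, 1 ≤ m → S2 m ≤ 3/4 * (((m+1).factorial : ℕ) : ℚ) := by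
  intro m hm
  match m, hm with
  | 1, _ =>
    unfold S2
    rw [show (1:ℕ)+1 = 2 from rfl, derange2, derange1]
    norm_num [Nat.factorial]
  | 2, _ =>
    unfold S2
    rw [show (2:ℕ)+1 = 3 from rfl, derange3, derange2]
    norm_num [Nat.factorial]
  | 3, _ =>
    unfold S2
    rw [show (3:ℕ)+1 = 4 from rfl, derange4, derange3]
    norm_num [Nat.factorial]
  | (k+4), _ =>
    unfold S2
    set m := k+4 with hmk
    have h1 : (2:ℚ) * (derange (m+1) : ℚ) ≤ (((m+1).factorial : ℕ) : ℚ) := by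
      exact_mod_cast two_derange_le (m+1) (by omega)
    have h2 : ((derange m : ℤ) : ℚ) ≤ ((m.factorial : ℕ) : ℚ) := by
      exact_mod_cast derange_le_factorial m
    have h3 : 1/((m:ℚ)+1) ≤ 1/2 := by
      rw [div_le_div_iff₀ (by positivity) (by norm_num)]
      have : (4:ℚ) ≤ (m:ℚ) := by exact_mod_cast (show 4 ≤ m by omega)
      linarith
    have hfac : (((m+1).factorial : ℕ) : ℚ) = ((m:ℚ)+1) * ((m.factorial : ℕ) : ℚ) := by
      rw [Nat.factorial_succ]; push_cast; ring
    have hm4 : (4:ℚ) ≤ (m:ℚ) := by exact_mod_cast (show 4 ≤ m by omega)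
    have hmf2 : (2:ℚ) ≤ ((m.factorial : ℕ) : ℚ) := by
      have : 2 ≤ m.factorial := le_trans (by omega) (Nat.self_le_factorial m)
      exact_mod_cast this
    nlinarith [h1, h2, h3, hfac, hm4, hmf2]

lemma S2_zero : S2 0 = 2 := by
  unfold S2
  rw [show (0:ℕ)+1 = 1 from rfl, derange1, derange]
  norm_num

-- abstract core of the final inequality, case v = 0
lemma final0_aux (e Dq F1 F4 P3 P5 Ta Tb A : ℚ) (he : 1 ≤ e) (hA : F4 * A = P5)
    (hD : 2*Dq ≤ F1) (hDpos : 0 ≤ Dq)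
    (hTa : P3*(2*e+4) + 3 ≤ 3*Ta) (hTb : P3 + 3 ≤ 3*Tb)
    (hf1 : P5 = P3 * ((2*e+4)*(2*e+5))) (hf3 : F4 = (e+4)*(e+3)*(e+2)*F1)
    (hF2 : 2 ≤ F1) (hP3 : 0 < P3) (hF4 : 0 < F4) :
    A * (1 + (e+4)*Dq + 2/2) ≤ Ta + (2*e+3)*Tb := by
  have hpoly : 3*(2*e+4)*(2*e+5)*(e+4) + 6*(2*e+4)*(2*e+5)
      ≤ 2*(4*e+7)*(e+2)*(e+3)*(e+4) := by nlinarith [he, sq_nonneg e, sq_nonneg (e-1)]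
  have key : 3 * P5 * (2 + (e+4)*Dq) ≤ (4*e+7) * P3 * F4 := by
    rw [hf1, hf3]
    have hZ : (0:ℚ) < (2*e+4)*(2*e+5) := by nlinarith
    have step1 : 2*(2 + (e+4)*Dq) ≤ 2*F1 + (e+4)*F1 := by nlinarith [hD, hF2, hDpos, he]
    have hPF : (0:ℚ) ≤ P3 * F1 := by nlinarith [hP3, hF2]
    nlinarith [mul_le_mul_of_nonneg_left step1 (show (0:ℚ) ≤ 3*P3*((2*e+4)*(2*e+5))/2 by nlinarith),
      mul_le_mul_of_nonneg_right hpoly hPF]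
  have h3T : P3*(4*e+7) ≤ 3*(Ta + (2*e+3)*Tb) := by
    nlinarith [hTa, mul_le_mul_of_nonneg_left hTb (show (0:ℚ) ≤ 2*e+3 by nlinarith), hP3, he]
  have hmul : (0:ℚ) < 3 * F4 := by linarith
  have hfinal : (3*F4) * (A * (1 + (e+4)*Dq + 2/2)) ≤ (3*F4) * (Ta + (2*e+3)*Tb) := by
    have e1 : (3*F4) * (A * (1 + (e+4)*Dq + 2/2)) = 3 * P5 * (2 + (e+4)*Dq) := by
      rw [← hA]; ring
    rw [e1]
    calc 3 * P5 * (2 + (e+4)*Dq) ≤ (4*e+7) * P3 * F4 := key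
      _ = F4 * (P3 * (4*e+7)) := by ring
      _ ≤ F4 * (3*(Ta + (2*e+3)*Tb)) := by nlinarith [h3T, hF4]
      _ = (3*F4) * (Ta + (2*e+3)*Tb) := by ring
  exact le_of_mul_le_mul_left hfinal hmul

-- abstract core of the final inequality, case v ≥ 1
lemma final1_aux (v e Dv Sv Se P2 A AS2 AS3 AB Fv1 Fv2 Fe2 Fb Phi Ta Tb : ℚ)
    (hv : 0 ≤ v) (he : 0 ≤ e)
    (hE4 : AS2 = (v+e+5) * A)
    (hId2 : AS2 * (P2 * (Fe2 * ((e+3) * (v+e+4)))) = Phi)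
    (hIdA : A * Fv2 * AS3 = Phi)
    (hsplit : AS3 = AB * ((v+e+4)*(v+e+5)))
    (hAB : 3 ≤ AB)
    (hSe : Se ≤ 3/4 * Fe2) (hSv : Sv ≤ 3/4 * Fv2)
    (hDv : Dv ≤ Fv1) (hvf : Fv2 = (v+2) * Fv1)
    (hT : Fb * (2*(v+2*e+4)+1) ≤ 3*(Ta + (v+2*e+4)*Tb))
    (hPhi : Phi = ((v+2*e+4)+2) * ((v+2*e+4)+1) * Fb)
    (hApos : 0 < A) (hP2pos : 0 < P2) (hSepos : 0 ≤ Se) (hSvpos : 0 ≤ Sv)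
    (hDvpos : 0 ≤ Dv) (hFv1 : 0 < Fv1) (hFb : 0 < Fb) (hFe2 : 0 < Fe2) :
    A * ((Dv + (v+e+5)*(P2*Se)) + Sv/2) ≤ Ta + (v+2*e+4)*Tb := by
  have hFv2 : (0:ℚ) < Fv2 := by nlinarith
  have hQ1 : (0:ℚ) < (v+e+4)*(v+e+5) := by nlinarith
  have hQ2 : (0:ℚ) < (e+3)*(v+e+4) := by nlinarith
  have hAS2 : (0:ℚ) < AS2 := by
    rw [hE4]; exact mul_pos (by linarith) hApos
  have hPhipos : (0:ℚ) < Phi := by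
    rw [hPhi]; exact mul_pos (mul_pos (by linarith) (by linarith)) hFb
  -- bound on Term2
  have K2 : (A * ((v+e+5)*(P2*Se))) * ((e+3)*(v+e+4)) ≤ 3/4 * Phi := by
    have e1 : (A * ((v+e+5)*(P2*Se))) * ((e+3)*(v+e+4))
        = (AS2 * P2 * ((e+3)*(v+e+4))) * Se := by rw [hE4]; ring
    rw [e1]
    have hc : (0:ℚ) ≤ AS2 * P2 * ((e+3)*(v+e+4)) := by positivity
    calc (AS2 * P2 * ((e+3)*(v+e+4))) * Se ≤ (AS2 * P2 * ((e+3)*(v+e+4))) * (3/4 * Fe2) :=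
          mul_le_mul_of_nonneg_left hSe hc
      _ = 3/4 * (AS2 * (P2 * (Fe2 * ((e+3) * (v+e+4))))) := by ring
      _ = 3/4 * Phi := by rw [hId2]
  -- bound on Term13
  have K1 : (A * (Dv + Sv/2)) * ((v+e+4)*(v+e+5)) ≤ 7/24 * Phi := by
    have s1 : Dv + Sv/2 ≤ 7/8 * Fv2 := by nlinarith [hDv, hSv, hvf, hv, hFv1]
    have s1a : A * (Dv + Sv/2) ≤ A * (7/8 * Fv2) := mul_le_mul_of_nonneg_left s1 (le_of_lt hApos)
    have s2 : (A * (Dv + Sv/2)) * ((v+e+4)*(v+e+5)) ≤ (A * (7/8 * Fv2)) * ((v+e+4)*(v+e+5)) :=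
      mul_le_mul_of_nonneg_right s1a (le_of_lt hQ1)
    have h3Q : 3*((v+e+4)*(v+e+5)) ≤ AS3 := by
      rw [hsplit]
      exact mul_le_mul_of_nonneg_right hAB (le_of_lt hQ1)
    have s3 : (A * Fv2) * (3*((v+e+4)*(v+e+5))) ≤ (A * Fv2) * AS3 :=
      mul_le_mul_of_nonneg_left h3Q (le_of_lt (mul_pos hApos hFv2))
    calc (A * (Dv + Sv/2)) * ((v+e+4)*(v+e+5)) ≤ (A * (7/8 * Fv2)) * ((v+e+4)*(v+e+5)) := s2
      _ = 7/24 * ((A * Fv2) * (3*((v+e+4)*(v+e+5)))) := by ring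
      _ ≤ 7/24 * ((A * Fv2) * AS3) := by linarith
      _ = 7/24 * Phi := by rw [← hIdA]
  -- final polynomial
  have hpoly : (18*(v+e+5) + 7*(e+3)) * (((v+2*e+4)+1)*((v+2*e+4)+2))
      ≤ 8*(2*(v+2*e+4)+1)*(e+3)*(v+e+4)*(v+e+5) := by
    nlinarith [hv, he, mul_nonneg hv he, mul_nonneg (mul_nonneg hv hv) he,
      mul_nonneg (mul_nonneg hv he) he, mul_nonneg hv hv, mul_nonneg he he,
      mul_nonneg (mul_nonneg hv hv) hv, mul_nonneg (mul_nonneg he he) he,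
      mul_nonneg (mul_nonneg (mul_nonneg hv hv) hv) he,
      mul_nonneg (mul_nonneg (mul_nonneg hv hv) he) he,
      mul_nonneg (mul_nonneg (mul_nonneg hv he) he) he,
      mul_nonneg (mul_nonneg (mul_nonneg hv hv) hv) hv,
      mul_nonneg (mul_nonneg (mul_nonneg he he) he) he]
  have hM : (0:ℚ) < 24*(e+3)*(v+e+4)*(v+e+5) := by nlinarith
  have hMgoal : (24*(e+3)*(v+e+4)*(v+e+5)) * (A * ((Dv + (v+e+5)*(P2*Se)) + Sv/2))
      ≤ (24*(e+3)*(v+e+4)*(v+e+5)) * (Ta + (v+2*e+4)*Tb) := by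
    have expand : (24*(e+3)*(v+e+4)*(v+e+5)) * (A * ((Dv + (v+e+5)*(P2*Se)) + Sv/2))
        = 24*(e+3) * ((A * (Dv + Sv/2)) * ((v+e+4)*(v+e+5)))
          + 24*(v+e+5) * ((A * ((v+e+5)*(P2*Se))) * ((e+3)*(v+e+4))) := by ring
    rw [expand]
    have c1 : (0:ℚ) ≤ 24*(e+3) := by linarith
    have c2 : (0:ℚ) ≤ 24*(v+e+5) := by linarith
    calc 24*(e+3) * ((A * (Dv + Sv/2)) * ((v+e+4)*(v+e+5)))
          + 24*(v+e+5) * ((A * ((v+e+5)*(P2*Se))) * ((e+3)*(v+e+4)))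
        ≤ 24*(e+3) * (7/24 * Phi) + 24*(v+e+5) * (3/4 * Phi) := by
          have g1 := mul_le_mul_of_nonneg_left K1 c1
          have g2 := mul_le_mul_of_nonneg_left K2 c2
          linarith
      _ = (18*(v+e+5) + 7*(e+3)) * Phi := by ring
      _ = ((18*(v+e+5) + 7*(e+3)) * (((v+2*e+4)+1)*((v+2*e+4)+2))) * Fb := by
          rw [hPhi]; ring
      _ ≤ (8*(2*(v+2*e+4)+1)*(e+3)*(v+e+4)*(v+e+5)) * Fb :=
          mul_le_mul_of_nonneg_right hpoly (le_of_lt hFb)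
      _ = (8*(e+3)*(v+e+4)*(v+e+5)) * (Fb * (2*(v+2*e+4)+1)) := by ring
      _ ≤ (8*(e+3)*(v+e+4)*(v+e+5)) * (3*(Ta + (v+2*e+4)*Tb)) := by
          have hc8 : (0:ℚ) ≤ 8*(e+3)*(v+e+4)*(v+e+5) := by nlinarith
          exact mul_le_mul_of_nonneg_left hT hc8
      _ = (24*(e+3)*(v+e+4)*(v+e+5)) * (Ta + (v+2*e+4)*Tb) := by ring
  exact le_of_mul_le_mul_left hMgoal hM

lemma final0 (e : ℕ) : ascQ (e+5) (e+1) * (LL e 0 + S2 0 / 2) ≤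
    ((derange (2*e+4) : ℤ) : ℚ) + ((2*e+3 : ℕ) : ℚ) * ((derange (2*e+3) : ℤ) : ℚ) := by
  rw [S2_zero]
  simp only [LL]
  rcases Nat.eq_zero_or_pos e with rfl | he1
  · rw [show (0:ℕ)+5 = 5 from rfl, show (0:ℕ)+1 = 1 from rfl, ascQ_succ, ascQ_zero,
      show 2*0+4 = 4 by norm_num, show 2*0+3 = 3 by norm_num, derange1, derange3, derange4]
    norm_num
  · have hA : (((e+4).factorial : ℕ) : ℚ) * ascQ (e+5) (e+1) = (((2*e+5).factorial : ℕ) : ℚ) := by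
      have h := factorial_ascQ (e+4) (e+1)
      rw [show e+4+(e+1) = 2*e+5 by omega] at h
      exact h
    have hD : 2 * ((derange (e+1) : ℤ) : ℚ) ≤ (((e+1).factorial : ℕ) : ℚ) := by
      exact_mod_cast two_derange_le (e+1) (by omega)
    have hDpos : (0:ℚ) ≤ ((derange (e+1) : ℤ) : ℚ) := by exact_mod_cast derange_nonneg (e+1)
    have hf2 : (((2*e+4).factorial : ℕ) : ℚ) = (((2*e+3).factorial : ℕ) : ℚ) * (2*(e:ℚ)+4) := by
      rw [show 2*e+4 = (2*e+3)+1 by omega, Nat.factorial_succ]; push_cast; ring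
    have hTa : (((2*e+3).factorial : ℕ) : ℚ) * (2*(e:ℚ)+4) + 3 ≤ 3 * ((derange (2*e+4) : ℤ) : ℚ) := by
      rw [← hf2]
      exact_mod_cast three_derange_ge (2*e+4) (by omega)
    have hTb : (((2*e+3).factorial : ℕ) : ℚ) + 3 ≤ 3 * ((derange (2*e+3) : ℤ) : ℚ) := by
      exact_mod_cast three_derange_ge (2*e+3) (by omega)
    have hf1 : (((2*e+5).factorial : ℕ) : ℚ)
        = (((2*e+3).factorial : ℕ) : ℚ) * ((2*(e:ℚ)+4) * (2*(e:ℚ)+5)) := by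
      rw [show 2*e+5 = (2*e+4)+1 by omega, Nat.factorial_succ,
        show 2*e+4 = (2*e+3)+1 by omega, Nat.factorial_succ]
      push_cast; ring
    have hf3 : (((e+4).factorial : ℕ) : ℚ)
        = ((e:ℚ)+4) * ((e:ℚ)+3) * ((e:ℚ)+2) * (((e+1).factorial : ℕ) : ℚ) := by
      rw [show e+4 = (e+3)+1 by omega, Nat.factorial_succ,
        show e+3 = (e+2)+1 by omega, Nat.factorial_succ,
        show e+2 = (e+1)+1 by omega, Nat.factorial_succ]
      push_cast; ring
    have hF2 : (2:ℚ) ≤ (((e+1).factorial : ℕ) : ℚ) := by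
      have : 2 ≤ (e+1).factorial := le_trans (by omega) (Nat.self_le_factorial (e+1))
      exact_mod_cast this
    have hP3 : (0:ℚ) < (((2*e+3).factorial : ℕ) : ℚ) := by
      exact_mod_cast Nat.factorial_pos (2*e+3)
    have hF4 : (0:ℚ) < (((e+4).factorial : ℕ) : ℚ) := by
      exact_mod_cast Nat.factorial_pos (e+4)
    have heq : (1:ℚ) ≤ (e:ℚ) := by exact_mod_cast he1
    have := final0_aux (e:ℚ) ((derange (e+1) : ℤ) : ℚ) (((e+1).factorial : ℕ) : ℚ)
      (((e+4).factorial : ℕ) : ℚ) (((2*e+3).factorial : ℕ) : ℚ) (((2*e+5).factorial : ℕ) : ℚ)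
      ((derange (2*e+4) : ℤ) : ℚ) ((derange (2*e+3) : ℤ) : ℚ) (ascQ (e+5) (e+1))
      heq hA hD hDpos hTa hTb hf1 hf3 hF2 hP3 hF4
    push_cast at this ⊢
    linarith

lemma final1 (e v' : ℕ) :
    ascQ (v'+e+6) (e+1) * (LL e (v'+1) + S2 (v'+1) / 2) ≤
    ((derange (v'+2*e+5) : ℤ) : ℚ) + ((v'+2*e+4 : ℕ) : ℚ) * ((derange (v'+2*e+4) : ℤ) : ℚ) := by
  simp only [LL]
  have hE4 : ascQ (v'+e+5) (e+2) = ((v':ℚ)+(e:ℚ)+5) * ascQ (v'+e+6) (e+1) := by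
    have h := ascQ_succ_left (v'+e+5) (e+1)
    rw [show v'+e+5+1 = v'+e+6 by omega] at h
    rw [h]; push_cast; ring
  have hId2 : ascQ (v'+e+5) (e+2) * (ascQ (e+4) v' * ((((e+2).factorial : ℕ):ℚ) *
      (((e:ℚ)+3) * ((v':ℚ)+(e:ℚ)+4)))) = (((v'+2*e+6).factorial : ℕ):ℚ) := by
    have c1 : (((e+3).factorial : ℕ):ℚ) = (((e+2).factorial : ℕ):ℚ) * ((e:ℚ)+3) := by
      rw [show e+3 = (e+2)+1 by omega, Nat.factorial_succ]; push_cast; ring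
    have c2 := factorial_ascQ (e+3) v'
    rw [show e+3+v' = v'+e+3 by omega] at c2
    have c3 : (((v'+e+4).factorial : ℕ):ℚ) = (((v'+e+3).factorial : ℕ):ℚ) * ((v':ℚ)+(e:ℚ)+4) := by
      rw [show v'+e+4 = (v'+e+3)+1 by omega, Nat.factorial_succ]; push_cast; ring
    have c4 := factorial_ascQ (v'+e+4) (e+2)
    rw [show v'+e+4+(e+2) = v'+2*e+6 by omega] at c4
    have c2' : ascQ (e+3+1) v' = ascQ (e+4) v' := by rw [show e+3+1 = e+4 by omega]
    rw [← c2'] at *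
    calc ascQ (v'+e+5) (e+2) * (ascQ (e+3+1) v' * ((((e+2).factorial : ℕ):ℚ) *
        (((e:ℚ)+3) * ((v':ℚ)+(e:ℚ)+4))))
        = (((((e+2).factorial : ℕ):ℚ) * ((e:ℚ)+3)) * ascQ (e+3+1) v') * ((v':ℚ)+(e:ℚ)+4)
            * ascQ (v'+e+5) (e+2) := by ring
      _ = ((((e+3).factorial : ℕ):ℚ) * ascQ (e+3+1) v') * ((v':ℚ)+(e:ℚ)+4)
            * ascQ (v'+e+5) (e+2) := by rw [← c1]
      _ = (((v'+e+3).factorial : ℕ):ℚ) * ((v':ℚ)+(e:ℚ)+4) * ascQ (v'+e+5) (e+2) := by rw [c2]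
      _ = (((v'+e+4).factorial : ℕ):ℚ) * ascQ (v'+e+5) (e+2) := by rw [c3]
      _ = (((v'+e+4).factorial : ℕ):ℚ) * ascQ (v'+e+4+1) (e+2) := by
            rw [show v'+e+4+1 = v'+e+5 by omega]
      _ = (((v'+2*e+6).factorial : ℕ):ℚ) := c4
  have hIdA : ascQ (v'+e+6) (e+1) * (((v'+2).factorial : ℕ):ℚ) * ascQ (v'+3) (e+3)
      = (((v'+2*e+6).factorial : ℕ):ℚ) := by
    have d1 := factorial_ascQ (v'+2) (e+3)
    rw [show v'+2+(e+3) = v'+e+5 by omega] at d1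
    have d2 := factorial_ascQ (v'+e+5) (e+1)
    rw [show v'+e+5+(e+1) = v'+2*e+6 by omega] at d2
    calc ascQ (v'+e+6) (e+1) * (((v'+2).factorial : ℕ):ℚ) * ascQ (v'+3) (e+3)
        = ((((v'+2).factorial : ℕ):ℚ) * ascQ (v'+2+1) (e+3)) * ascQ (v'+e+6) (e+1) := by
          rw [show v'+2+1 = v'+3 by omega]; ring
      _ = (((v'+e+5).factorial : ℕ):ℚ) * ascQ (v'+e+6) (e+1) := by rw [d1]
      _ = (((v'+e+5).factorial : ℕ):ℚ) * ascQ (v'+e+5+1) (e+1) := by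
          rw [show v'+e+5+1 = v'+e+6 by omega]
      _ = (((v'+2*e+6).factorial : ℕ):ℚ) := d2
  have hsplit : ascQ (v'+3) (e+3) = ascQ (v'+3) (e+1) *
      (((v':ℚ)+(e:ℚ)+4)*((v':ℚ)+(e:ℚ)+5)) := by
    rw [show e+3 = (e+2)+1 by omega, ascQ_succ, show e+2 = (e+1)+1 by omega, ascQ_succ]
    push_cast; ring
  have hAB : (3:ℚ) ≤ ascQ (v'+3) (e+1) := by
    have h := base_le_ascQ (v'+3) e (by omega)
    have : (3:ℚ) ≤ ((v'+3 : ℕ):ℚ) := by exact_mod_cast (show 3 ≤ v'+3 by omega)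
    linarith
  have hSe := S2_le (e+1) (by omega)
  have hSv := S2_le (v'+1) (by omega)
  have hDv : ((derange (v'+1) : ℤ):ℚ) ≤ (((v'+1).factorial : ℕ):ℚ) := by
    exact_mod_cast derange_le_factorial (v'+1)
  have hvf : (((v'+2).factorial : ℕ):ℚ) = ((v':ℚ)+2) * (((v'+1).factorial : ℕ):ℚ) := by
    rw [show v'+2 = (v'+1)+1 by omega, Nat.factorial_succ]; push_cast; ring
  have hTa : (((v'+2*e+5).factorial : ℕ):ℚ) + 3 ≤ 3 * ((derange (v'+2*e+5) : ℤ):ℚ) := by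
    exact_mod_cast three_derange_ge (v'+2*e+5) (by omega)
  have hTb : (((v'+2*e+4).factorial : ℕ):ℚ) + 3 ≤ 3 * ((derange (v'+2*e+4) : ℤ):ℚ) := by
    exact_mod_cast three_derange_ge (v'+2*e+4) (by omega)
  have hfb1 : (((v'+2*e+5).factorial : ℕ):ℚ)
      = ((v':ℚ)+2*(e:ℚ)+5) * (((v'+2*e+4).factorial : ℕ):ℚ) := by
    rw [show v'+2*e+5 = (v'+2*e+4)+1 by omega, Nat.factorial_succ]; push_cast; ring
  have hT : (((v'+2*e+4).factorial : ℕ):ℚ) * (2*(((v':ℚ))+2*(e:ℚ)+4)+1)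
      ≤ 3*(((derange (v'+2*e+5) : ℤ):ℚ) + (((v':ℚ))+2*(e:ℚ)+4) * ((derange (v'+2*e+4) : ℤ):ℚ)) := by
    have hBpos : (0:ℚ) ≤ (v':ℚ)+2*(e:ℚ)+4 := by positivity
    have h2 := mul_le_mul_of_nonneg_left hTb hBpos
    nlinarith [hTa, hfb1]
  have hPhi : (((v'+2*e+6).factorial : ℕ):ℚ) = (((v':ℚ)+2*(e:ℚ)+4)+2) * (((v':ℚ)+2*(e:ℚ)+4)+1)
      * (((v'+2*e+4).factorial : ℕ):ℚ) := by
    rw [show v'+2*e+6 = (v'+2*e+5)+1 by omega, Nat.factorial_succ]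
    push_cast
    rw [hfb1]
    ring
  have hApos := ascQ_pos (v'+e+6) (e+1) (by omega)
  have hP2pos := ascQ_pos (e+4) v' (by omega)
  have hSepos := (S2_pos (e+1)).le
  have hSvpos := (S2_pos (v'+1)).le
  have hDvpos : (0:ℚ) ≤ ((derange (v'+1) : ℤ):ℚ) := by exact_mod_cast derange_nonneg (v'+1)
  have hFv1 : (0:ℚ) < (((v'+1).factorial : ℕ):ℚ) := by exact_mod_cast Nat.factorial_pos (v'+1)
  have hFb : (0:ℚ) < (((v'+2*e+4).factorial : ℕ):ℚ) := by exact_mod_cast Nat.factorial_pos (v'+2*e+4)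
  have hFe2 : (0:ℚ) < (((e+2).factorial : ℕ):ℚ) := by exact_mod_cast Nat.factorial_pos (e+2)
  have hmain := final1_aux (v':ℚ) (e:ℚ) ((derange (v'+1) : ℤ):ℚ) (S2 (v'+1)) (S2 (e+1))
    (ascQ (e+4) v') (ascQ (v'+e+6) (e+1)) (ascQ (v'+e+5) (e+2)) (ascQ (v'+3) (e+3))
    (ascQ (v'+3) (e+1)) (((v'+1).factorial : ℕ):ℚ) (((v'+2).factorial : ℕ):ℚ)
    (((e+2).factorial : ℕ):ℚ) (((v'+2*e+4).factorial : ℕ):ℚ) (((v'+2*e+6).factorial : ℕ):ℚ)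
    ((derange (v'+2*e+5) : ℤ):ℚ) ((derange (v'+2*e+4) : ℤ):ℚ)
    (by positivity) (by positivity) hE4 hId2 hIdA hsplit hAB hSe hSv hDv hvf hT hPhi
    hApos hP2pos hSepos hSvpos hDvpos hFv1 hFb hFe2
  push_cast at hmain ⊢
  linarith

/-- For odd `n = 2b+1` and a three-part partition `(b, c, d)` of `n` with `c < b` and
`d ≥ 2`: `|η_{(b,c,d)}| ≤ D_{b+1} + b D_b`. -/
theorem eta_abs_bcd_upper (n b c d : ℕ) (hn : n = 2 * b + 1)
    (hcb : c < b) (hdc : d ≤ c) (hd : 2 ≤ d) (hsum : b + c + d = n) :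
    |eta [b, c, d]| ≤ derange (b + 1) + (b : ℤ) * derange b := by
  obtain ⟨e, rfl⟩ : ∃ e, d = e+2 := ⟨d-2, by omega⟩
  obtain ⟨v, rfl⟩ : ∃ v, c = v+(e+2) := ⟨c-(e+2), by omega⟩
  have hb : b = v+2*e+3 := by omega
  subst hb
  have hmain := three_row_le (e+1) e v
  rw [show v+e+(e+1)+2 = v+2*e+3 by omega, show v+(e+1)+1 = v+(e+2) by omega,
    show (e+1)+1 = e+2 by omega] at hmain
  match v with
  | 0 =>
    have hf := final0 e
    rw [show (0:ℕ)+e+5 = e+5 by omega] at hmain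
    have hQ : |((eta [0+2*e+3, 0+(e+2), e+2] : ℤ) : ℚ)|
        ≤ ((derange (2*e+4) : ℤ) : ℚ) + ((2*e+3 : ℕ) : ℚ) * ((derange (2*e+3) : ℤ) : ℚ) :=
      le_trans hmain hf
    rw [show 0+2*e+3+1 = 2*e+4 by omega, show 0+2*e+3 = 2*e+3 by omega]
    rw [show (0:ℕ)+2*e+3 = 2*e+3 by omega] at hQ
    rw [← Int.cast_abs] at hQ
    exact_mod_cast hQ
  | v'+1 =>
    have hf := final1 e v'
    rw [show v'+1+e+5 = v'+e+6 by omega] at hmain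
    have hQ : |((eta [v'+1+2*e+3, v'+1+(e+2), e+2] : ℤ) : ℚ)|
        ≤ ((derange (v'+2*e+5) : ℤ) : ℚ) + ((v'+2*e+4 : ℕ) : ℚ) * ((derange (v'+2*e+4) : ℤ) : ℚ) := by
      exact le_trans hmain hf
    rw [show v'+1+2*e+3+1 = v'+2*e+5 by omega, show v'+1+2*e+3 = v'+2*e+4 by omega]
    rw [show v'+1+2*e+3 = v'+2*e+4 by omega] at hQ
    rw [← Int.cast_abs] at hQ
    exact_mod_cast hQ
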